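/- Let (N,c) be a TU cost game satisfying c(N∖{k}) ≤ c(N) for all k ∈ N, with |N| = n ≥ 2. Then every allocation x ∈ ℝ^N with x(S) ≤ c(S) for all proper subsets S ⊊ N satisfies x(N) ≤ (1 + 1/(n-1)) · c(N). -/

import Mathlib

open Finset

/-- If c(N∖{k}) ≤ c(N) for all k and n ≥ 2, then every almost core allocation x
satisfies x(N) ≤ (1 + 1/(n-1))·c(N). -/
theorem almost_core_bound {n : ℕ} (hn : 2 ≤ n) (c : Finset (Fin n) → ℝ)
    (hc : ∀ S, 0 ≤ c S)
    (hmono : ∀ k : Fin n, c (univ.erase k) ≤ c univ)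
    (x : Fin n → ℝ)
    (hx : ∀ S : Finset (Fin n), S ⊂ univ → ∑ i ∈ S, x i ≤ c S) :
    ∑ i, x i ≤ (1 + 1 / ((n : ℝ) - 1)) * c univ := by
  have hpos : (0:ℝ) < (n:ℝ) - 1 := by
    have : (2:ℝ) ≤ n := by exact_mod_cast hn
    linarith
  have key : ((n:ℝ) - 1) * ∑ i, x i ≤ (n:ℝ) * c univ := by
    have h1 : ∀ k : Fin n, ∑ i ∈ univ.erase k, x i ≤ c univ := by
      intro k
      exact le_trans (hx _ (erase_ssubset (mem_univ k))) (hmono k)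
    have h2 : ∑ k : Fin n, ∑ i ∈ univ.erase k, x i ≤ ∑ _k : Fin n, c univ :=
      Finset.sum_le_sum fun k _ => h1 k
    have h3 : ∑ k : Fin n, ∑ i ∈ univ.erase k, x i = ((n:ℝ) - 1) * ∑ i, x i := by
      have : ∀ k : Fin n, ∑ i ∈ univ.erase k, x i = (∑ i, x i) - x k := by
        intro k
        rw [Finset.sum_erase_eq_sub (mem_univ k)]
      simp only [this, Finset.sum_sub_distrib, Finset.sum_const, card_univ,
        Fintype.card_fin, nsmul_eq_mul]
      ring
    have h4 : ∑ _k : Fin n, c univ = (n:ℝ) * c univ := by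
      simp [Finset.sum_const, card_univ, mul_comm]
    rw [h3, h4] at h2
    exact h2
  have : ∑ i, x i ≤ ((n:ℝ) / ((n:ℝ) - 1)) * c univ := by
    rw [div_mul_eq_mul_div, le_div_iff₀ hpos]
    linarith [key]
  have heq : (1 + 1 / ((n : ℝ) - 1)) = (n:ℝ) / ((n:ℝ) - 1) := by
    field_simp
    ring
  rw [heq]
  exact this
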